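/- Let a, b > 0, let k, ℓ be integers ≥ 1, and multi-indices α, β. Then |∂_x^β ∂_ξ^α (b|x|^(2k) + a|ξ|^(2ℓ))| ≤ C_{αβ} max{a,b,1} (1 + b|x|^(2k) + a|ξ|^(2ℓ))^(1 − |β|/(2k) − |α|/(2ℓ)) for all x, ξ ∈ ℝⁿ, where C_{αβ} depends only on α, β, k, ℓ, n (not on a, b). -/

import Mathlib

open MvPolynomial

/-- The mixed multi-index partial derivative `∂_x^β ∂_ξ^α` acting on polynomials in the
variables `(x, ξ) ∈ ℝⁿ × ℝⁿ`. -/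
noncomputable def multiPDeriv (n : ℕ) (β α : Fin n → ℕ) :
    Module.End ℝ (MvPolynomial (Fin n ⊕ Fin n) ℝ) :=
  (List.ofFn fun i : Fin n =>
      ((pderiv (R := ℝ) (Sum.inl i : Fin n ⊕ Fin n)).toLinearMap ^ β i)).prod *
  (List.ofFn fun i : Fin n =>
      ((pderiv (R := ℝ) (Sum.inr i : Fin n ⊕ Fin n)).toLinearMap ^ α i)).prod

namespace AnharmonicAux

variable {n : ℕ}

lemma degree_eq_sum (d : Fin n →₀ ℕ) : d.degree = ∑ i, d i :=
  Finset.sum_subset (Finset.subset_univ _)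
    (fun i _ hi => Finsupp.notMem_support_iff.mp hi)

lemma degree_sub_single {d : Fin n →₀ ℕ} {i : Fin n} (h : d i ≠ 0) :
    (d - Finsupp.single i 1).degree = d.degree - 1 := by
  classical
  have key : ∀ j : Fin n, ((d - Finsupp.single i 1 : Fin n →₀ ℕ)) j
      = d j - (Finsupp.single i 1 : Fin n →₀ ℕ) j := fun j =>
    Finsupp.tsub_apply d (Finsupp.single i 1) j
  rw [degree_eq_sum, degree_eq_sum, ← Finset.add_sum_erase _ d (Finset.mem_univ i),
    ← Finset.add_sum_erase _ _ (Finset.mem_univ i)]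
  have h2 : ∀ j ∈ Finset.univ.erase i, ((d - Finsupp.single i 1 : Fin n →₀ ℕ)) j = d j := by
    intro j hj
    rw [key j, Finsupp.single_eq_of_ne' (Ne.symm (Finset.mem_erase.mp hj).1), Nat.sub_zero]
  rw [Finset.sum_congr rfl h2, key i, Finsupp.single_eq_same]
  show d i - 1 + ∑ x ∈ Finset.univ.erase i, d x
      = d i + (∑ x ∈ Finset.univ.erase i, d x) - 1
  have hd1 : 1 ≤ d i := Nat.one_le_iff_ne_zero.mpr h
  omega

lemma isHomog_pderiv {p : MvPolynomial (Fin n) ℝ} {d : ℕ} (h : p.IsHomogeneous d)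
    (i : Fin n) : ((pderiv (R := ℝ) i) p).IsHomogeneous (d - 1) := by
  classical
  rw [p.as_sum, map_sum]
  apply IsHomogeneous.sum
  intro m hm
  rw [pderiv_monomial]
  by_cases h0 : m i = 0
  · rw [h0]
    simp only [Nat.cast_zero, mul_zero, map_zero]
    exact isHomogeneous_zero _ _ _
  · apply isHomogeneous_monomial
    rw [degree_sub_single h0]
    have hd : m.degree = d := by
      have := h (mem_support_iff.mp hm)
      rwa [Finsupp.degree_eq_weight_one]
    rw [hd]

lemma pderiv_homog_zero {p : MvPolynomial (Fin n) ℝ} (h : p.IsHomogeneous 0)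
    (i : Fin n) : (pderiv (R := ℝ) i) p = 0 := by
  classical
  have h0 : p.totalDegree = 0 := (totalDegree_zero_iff_isHomogeneous (σ := Fin n)).mpr h
  rw [p.as_sum, map_sum]
  apply Finset.sum_eq_zero
  intro m hm
  rw [pderiv_monomial]
  have : m i = 0 := (totalDegree_eq_zero_iff _ p).mp h0 m hm i
  simp [this]

lemma pow_pderiv_homog {p : MvPolynomial (Fin n) ℝ} {d : ℕ} (h : p.IsHomogeneous d)
    (i : Fin n) (m : ℕ) :
    ((((pderiv (R := ℝ) i).toLinearMap) ^ m) p).IsHomogeneous (d - m) ∧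
      (d < m → (((pderiv (R := ℝ) i).toLinearMap) ^ m) p = 0) := by
  induction m generalizing p d with
  | zero =>
    simp only [pow_zero, Module.End.one_apply, Nat.sub_zero]
    exact ⟨h, fun hc => absurd hc (by omega)⟩
  | succ m ih =>
    have hstep : (((pderiv (R := ℝ) i).toLinearMap) ^ (m + 1)) p
        = (((pderiv (R := ℝ) i).toLinearMap) ^ m) ((pderiv (R := ℝ) i) p) := by
      rw [pow_succ, Module.End.mul_apply]; rfl
    have h' : ((pderiv (R := ℝ) i) p).IsHomogeneous (d - 1) := isHomog_pderiv h i
    constructor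
    · rw [hstep]
      have := (ih h').1
      have hnum : d - 1 - m = d - (m + 1) := by omega
      rwa [hnum] at this
    · intro hdm
      rw [hstep]
      by_cases hd0 : d = 0
      · subst hd0
        rw [pderiv_homog_zero h i, map_zero]
      · exact (ih h').2 (by omega)

lemma listprod_homog (L : List (Fin n × ℕ)) {p : MvPolynomial (Fin n) ℝ} {d : ℕ}
    (h : p.IsHomogeneous d) :
    (((L.map fun im => (pderiv (R := ℝ) im.1).toLinearMap ^ im.2).prod) p).IsHomogeneous
        (d - (L.map Prod.snd).sum) ∧
      (d < (L.map Prod.snd).sum →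
        ((L.map fun im => (pderiv (R := ℝ) im.1).toLinearMap ^ im.2).prod) p = 0) := by
  induction L generalizing p d with
  | nil =>
    simp only [List.map_nil, List.prod_nil, List.sum_nil, Module.End.one_apply, Nat.sub_zero]
    exact ⟨h, fun hc => absurd hc (by omega)⟩
  | cons im L ih =>
    simp only [List.map_cons, List.prod_cons, List.sum_cons, Module.End.mul_apply]
    obtain ⟨ih1, ih2⟩ := ih h
    obtain ⟨h1, h2⟩ := pow_pderiv_homog ih1 im.1 im.2
    constructor
    · have hnum : d - (L.map Prod.snd).sum - im.2 = d - (im.2 + (L.map Prod.snd).sum) := by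
        omega
      rwa [hnum] at h1
    · intro hlt
      by_cases hS : d < (L.map Prod.snd).sum
      · rw [ih2 hS, map_zero]
      · exact h2 (by omega)

/-- The multi-index derivative on `MvPolynomial (Fin n) ℝ`. -/
noncomputable def mD (β : Fin n → ℕ) : Module.End ℝ (MvPolynomial (Fin n) ℝ) :=
  (List.ofFn fun i => (pderiv (R := ℝ) i).toLinearMap ^ β i).prod

lemma mD_eq (β : Fin n → ℕ) :
    mD β = ((List.ofFn fun i => (i, β i)).map
      fun im => (pderiv (R := ℝ) im.1).toLinearMap ^ im.2).prod := by
  rw [List.map_ofFn]; rfl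

lemma sum_ofFn_snd (β : Fin n → ℕ) :
    ((List.ofFn fun i => (i, β i)).map Prod.snd).sum = ∑ i, β i := by
  rw [List.map_ofFn, List.sum_ofFn]; rfl

lemma mD_homog (β : Fin n → ℕ) {p : MvPolynomial (Fin n) ℝ} {d : ℕ}
    (h : p.IsHomogeneous d) :
    ((mD β) p).IsHomogeneous (d - ∑ i, β i) ∧ (d < ∑ i, β i → (mD β) p = 0) := by
  have := listprod_homog (List.ofFn fun i => (i, β i)) h
  rwa [mD_eq β, ← sum_ofFn_snd β]

lemma pow_pderiv_rename {f : Fin n → Fin n ⊕ Fin n} (hf : Function.Injective f)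
    (i : Fin n) (m : ℕ) (q : MvPolynomial (Fin n) ℝ) :
    (((pderiv (R := ℝ) (f i)).toLinearMap ^ m)) (rename f q)
      = rename f (((pderiv (R := ℝ) i).toLinearMap ^ m) q) := by
  induction m generalizing q with
  | zero => simp
  | succ m ih =>
    simp only [pow_succ, Module.End.mul_apply]
    have h1 : ((pderiv (R := ℝ) (f i)).toLinearMap) (rename f q)
        = rename f ((pderiv (R := ℝ) i) q) := pderiv_rename hf i q
    rw [h1, ih]
    rfl

lemma listprod_rename_aux {f : Fin n → Fin n ⊕ Fin n} (hf : Function.Injective f)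
    (L : List (Fin n × ℕ)) (q : MvPolynomial (Fin n) ℝ) :
    ((L.map fun im => (pderiv (R := ℝ) (f im.1)).toLinearMap ^ im.2).prod) (rename f q)
      = rename f (((L.map fun im => (pderiv (R := ℝ) im.1).toLinearMap ^ im.2).prod) q) := by
  induction L generalizing q with
  | nil => simp
  | cons im L ih =>
    simp only [List.map_cons, List.prod_cons, Module.End.mul_apply]
    rw [ih, pow_pderiv_rename hf]

lemma Lpart_rename {f : Fin n → Fin n ⊕ Fin n} (hf : Function.Injective f)
    (β : Fin n → ℕ) (q : MvPolynomial (Fin n) ℝ) :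
    ((List.ofFn fun i => (pderiv (R := ℝ) (f i)).toLinearMap ^ β i).prod) (rename f q)
      = rename f ((mD β) q) := by
  have h1 : (List.ofFn fun i => (pderiv (R := ℝ) (f i)).toLinearMap ^ β i)
      = (List.ofFn fun i => (i, β i)).map
          fun im => (pderiv (R := ℝ) (f im.1)).toLinearMap ^ im.2 := by
    rw [List.map_ofFn]; rfl
  rw [h1, listprod_rename_aux hf, mD_eq β]

lemma listprod_mem {M : Type*} [AddCommMonoid M] [Module ℝ M] (T : Set M)
    (L : List (Module.End ℝ M)) (hT : ∀ g ∈ L, ∀ p ∈ T, g p ∈ T) {p : M} (hp : p ∈ T) :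
    L.prod p ∈ T := by
  induction L with
  | nil => simpa using hp
  | cons g L ih =>
    rw [List.prod_cons, Module.End.mul_apply]
    exact hT g List.mem_cons_self _
      (ih (fun g' hg' => hT g' (List.mem_cons_of_mem _ hg')))

lemma listprod_eq_zero {M : Type*} [AddCommMonoid M] [Module ℝ M] (T : Set M)
    (L : List (Module.End ℝ M)) (hT : ∀ g ∈ L, ∀ p ∈ T, g p ∈ T)
    (hz : ∃ g ∈ L, ∀ p ∈ T, g p = 0) {p : M} (hp : p ∈ T) : L.prod p = 0 := by
  induction L with
  | nil => simp at hz
  | cons g L ih =>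
    rw [List.prod_cons, Module.End.mul_apply]
    obtain ⟨g0, hg0, hg0z⟩ := hz
    rcases List.mem_cons.mp hg0 with rfl | hmem
    · exact hg0z _ (listprod_mem T L (fun g' hg' => hT g' (List.mem_cons_of_mem _ hg')) hp)
    · rw [ih (fun g' hg' => hT g' (List.mem_cons_of_mem _ hg')) ⟨g0, hmem, hg0z⟩, map_zero]

lemma list_pderiv_zero (s : Fin n → Fin n ⊕ Fin n) (α : Fin n → ℕ) (hα : α ≠ 0)
    {p : MvPolynomial (Fin n ⊕ Fin n) ℝ} (hp : ∀ j, pderiv (R := ℝ) (s j) p = 0) :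
    ((List.ofFn fun i => (pderiv (R := ℝ) (s i)).toLinearMap ^ α i).prod) p = 0 := by
  set T : Set (MvPolynomial (Fin n ⊕ Fin n) ℝ) :=
    {q | ∀ j : Fin n, pderiv (R := ℝ) (s j) q = 0} with hTdef
  have h0 : (0 : MvPolynomial (Fin n ⊕ Fin n) ℝ) ∈ T := fun j => map_zero _
  have hkill : ∀ (i : Fin n) (m : ℕ), 1 ≤ m → ∀ q ∈ T,
      (((pderiv (R := ℝ) (s i)).toLinearMap) ^ m) q = 0 := by
    intro i m hm q hq
    obtain ⟨m', rfl⟩ : ∃ m', m = m' + 1 := ⟨m - 1, by omega⟩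
    rw [pow_succ, Module.End.mul_apply,
      show ((pderiv (R := ℝ) (s i)).toLinearMap) q = 0 from hq i, map_zero]
  have hT : ∀ g ∈ (List.ofFn fun i => (pderiv (R := ℝ) (s i)).toLinearMap ^ α i),
      ∀ q ∈ T, g q ∈ T := by
    intro g hg q hq
    obtain ⟨i, hi⟩ := List.mem_ofFn.mp hg
    subst hi
    show (((pderiv (R := ℝ) (s i)).toLinearMap) ^ α i) q ∈ T
    rcases Nat.eq_zero_or_pos (α i) with h0' | h0'
    · rw [h0', pow_zero, Module.End.one_apply]; exact hq
    · rw [hkill i (α i) h0' q hq]; exact h0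
  have hz : ∃ g ∈ (List.ofFn fun i => (pderiv (R := ℝ) (s i)).toLinearMap ^ α i),
      ∀ q ∈ T, g q = 0 := by
    obtain ⟨i, hi⟩ : ∃ i, α i ≠ 0 := by
      by_contra hcon
      push_neg at hcon
      exact hα (funext hcon)
    exact ⟨_, List.mem_ofFn.mpr ⟨i, rfl⟩, fun q hq => hkill i (α i) (by omega) q hq⟩
  exact listprod_eq_zero T _ hT hz hp

lemma pderiv_rename_ne {f : Fin n → Fin n ⊕ Fin n} (j : Fin n ⊕ Fin n)
    (hj : ∀ i, f i ≠ j) (q : MvPolynomial (Fin n) ℝ) :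
    pderiv (R := ℝ) j (rename f q) = 0 := by
  apply pderiv_eq_zero_of_notMem_vars
  intro hmem
  obtain ⟨i, -, hi⟩ := mem_vars_rename f q hmem
  exact hj i hi

lemma homog_bound {p : MvPolynomial (Fin n) ℝ} {d : ℕ} (h : p.IsHomogeneous d) :
    ∃ C > (0 : ℝ), ∀ x : Fin n → ℝ,
      |eval x p| ≤ C * (∑ i, x i ^ 2) ^ ((d : ℝ) / 2) := by
  refine ⟨(∑ m ∈ p.support, |coeff m p|) + 1, by positivity, fun x => ?_⟩
  set s := ∑ i, x i ^ 2 with hsdef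
  have hs0 : 0 ≤ s := by positivity
  have hxb : ∀ i, |x i| ≤ Real.sqrt s := by
    intro i
    rw [← Real.sqrt_sq_eq_abs]
    exact Real.sqrt_le_sqrt
      (Finset.single_le_sum (fun i _ => sq_nonneg (x i)) (Finset.mem_univ i))
  have hsq : Real.sqrt s ^ d = s ^ ((d : ℝ) / 2) := by
    rw [Real.sqrt_eq_rpow, ← Real.rpow_natCast (s ^ ((1 : ℝ) / 2)) d,
      ← Real.rpow_mul hs0]
    ring_nf
  calc |eval x p| = |∑ m ∈ p.support, coeff m p * ∏ i, x i ^ m i| := by rw [eval_eq']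
    _ ≤ ∑ m ∈ p.support, |coeff m p * ∏ i, x i ^ m i| := Finset.abs_sum_le_sum_abs _ _
    _ ≤ ∑ m ∈ p.support, |coeff m p| * Real.sqrt s ^ d := by
        apply Finset.sum_le_sum
        intro m hm
        rw [abs_mul]
        refine mul_le_mul_of_nonneg_left ?_ (abs_nonneg _)
        have hdeg : ∑ i, m i = d := by
          have h1 := h (mem_support_iff.mp hm)
          change (Finsupp.weight fun _ => 1) m = d at h1
          rw [← Finsupp.degree_eq_weight_one] at h1
          rwa [degree_eq_sum] at h1
        calc |∏ i, x i ^ m i| = ∏ i, |x i| ^ m i := by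
              rw [Finset.abs_prod]
              exact Finset.prod_congr rfl fun i _ => abs_pow _ _
          _ ≤ ∏ i, Real.sqrt s ^ m i :=
              Finset.prod_le_prod (fun i _ => by positivity)
                (fun i _ => pow_le_pow_left₀ (abs_nonneg _) (hxb i) _)
          _ = Real.sqrt s ^ d := by rw [Finset.prod_pow_eq_pow_sum, hdeg]
    _ = (∑ m ∈ p.support, |coeff m p|) * Real.sqrt s ^ d := by rw [← Finset.sum_mul]
    _ ≤ ((∑ m ∈ p.support, |coeff m p|) + 1) * s ^ ((d : ℝ) / 2) := by
        rw [hsq]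
        refine mul_le_mul_of_nonneg_right ?_ (Real.rpow_nonneg hs0 _)
        have : 0 ≤ ∑ m ∈ p.support, |coeff m p| :=
          Finset.sum_nonneg fun m _ => abs_nonneg _
        linarith

lemma side_bound (k : ℕ) (hk : 1 ≤ k) (B : ℕ) (hB : B ≤ 2 * k) (C : ℝ) (hC : 0 < C)
    (b s σ' M : ℝ) (hb : 0 < b) (hs : 0 ≤ s) (hσ1 : 1 ≤ σ') (hσ2 : b * s ^ k ≤ σ')
    (hbM : b ≤ M) (hM : 1 ≤ M) :
    b * (C * s ^ (((2 * k - B : ℕ) : ℝ) / 2)) ≤ C * M * σ' ^ (1 - (B : ℝ) / (2 * k)) := by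
  have hk0 : (0 : ℝ) < 2 * k := by positivity
  set θ : ℝ := (B : ℝ) / (2 * k) with hθdef
  have hθ0 : 0 ≤ θ := by positivity
  have hθ1 : θ ≤ 1 := by
    rw [hθdef, div_le_one hk0]
    exact_mod_cast hB
  have hstep1 : (((2 * k - B : ℕ) : ℝ)) / 2 = (k : ℝ) * (1 - θ) := by
    have hc : ((2 * k - B : ℕ) : ℝ) = 2 * (k : ℝ) - B := by
      rw [Nat.cast_sub hB]; push_cast; ring
    rw [hc, hθdef]
    have hkne : (2 * (k : ℝ)) ≠ 0 := ne_of_gt hk0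
    field_simp
  have hstep2 : s ^ ((k : ℝ) * (1 - θ)) = (s ^ k) ^ (1 - θ) := by
    rw [Real.rpow_mul hs, Real.rpow_natCast]
  have hbsplit : b = b ^ θ * b ^ (1 - θ) := by
    rw [← Real.rpow_add hb]
    norm_num
  have hmain : b * s ^ (((2 * k - B : ℕ) : ℝ) / 2)
      = b ^ θ * (b * s ^ k) ^ (1 - θ) := by
    rw [hstep1, hstep2, Real.mul_rpow hb.le (pow_nonneg hs k)]
    nth_rewrite 1 [hbsplit]
    ring
  have hbθ : b ^ θ ≤ M := by
    rcases le_total 1 b with h1b | h1b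
    · calc b ^ θ ≤ b ^ (1 : ℝ) := Real.rpow_le_rpow_of_exponent_le h1b hθ1
        _ = b := Real.rpow_one b
        _ ≤ M := hbM
    · calc b ^ θ ≤ 1 := Real.rpow_le_one hb.le h1b hθ0
        _ ≤ M := hM
  have hfac : (b * s ^ k) ^ (1 - θ) ≤ σ' ^ (1 - θ) :=
    Real.rpow_le_rpow (by positivity) hσ2 (by linarith)
  calc b * (C * s ^ (((2 * k - B : ℕ) : ℝ) / 2))
      = C * (b ^ θ * (b * s ^ k) ^ (1 - θ)) := by rw [← hmain]; ring
    _ ≤ C * (M * σ' ^ (1 - θ)) := by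
        refine mul_le_mul_of_nonneg_left ?_ hC.le
        exact mul_le_mul hbθ hfac (by positivity) (by linarith)
    _ = C * M * σ' ^ (1 - θ) := by ring

end AnharmonicAux

set_option maxHeartbeats 2000000 in
open AnharmonicAux in
/-- Stage 2: uniform symbol estimates for `σ_{ab}(x,ξ) = b|x|^(2k) + a|ξ|^(2ℓ)` with
structural constants independent of `a, b`. -/
theorem anharmonic_symbol_class_ab (n k ℓ : ℕ) (hn : 1 ≤ n) (hk : 1 ≤ k) (hl : 1 ≤ ℓ)
    (β α : Fin n → ℕ) :
    ∃ C > (0 : ℝ), ∀ a b : ℝ, 0 < a → 0 < b → ∀ x ξ : Fin n → ℝ,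
      |eval (Sum.elim x ξ)
          (multiPDeriv n β α
            (MvPolynomial.C b * (∑ i : Fin n, X (Sum.inl i : Fin n ⊕ Fin n) ^ 2) ^ k +
              MvPolynomial.C a * (∑ i : Fin n, X (Sum.inr i : Fin n ⊕ Fin n) ^ 2) ^ ℓ))|
        ≤ C * max (max a b) 1 *
            (1 + b * (∑ i, x i ^ 2) ^ k + a * (∑ i, ξ i ^ 2) ^ ℓ) ^
            ((1 : ℝ) - (∑ i, β i : ℝ) / (2 * (k : ℝ)) - (∑ i, α i : ℝ) / (2 * (ℓ : ℝ))) := by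
  set p₀ : MvPolynomial (Fin n) ℝ := (∑ i : Fin n, X i ^ 2) ^ k with hp₀def
  set q₀ : MvPolynomial (Fin n) ℝ := (∑ i : Fin n, X i ^ 2) ^ ℓ with hq₀def
  have hsum2 : (∑ i : Fin n, (X i : MvPolynomial (Fin n) ℝ) ^ 2).IsHomogeneous 2 :=
    IsHomogeneous.sum _ _ _ fun i _ => isHomogeneous_X_pow i 2
  have hp₀ : p₀.IsHomogeneous (2 * k) := hsum2.pow k
  have hq₀ : q₀.IsHomogeneous (2 * ℓ) := hsum2.pow ℓ
  obtain ⟨hβhom, hβ0⟩ := mD_homog β hp₀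
  obtain ⟨hαhom, hα0⟩ := mD_homog α hq₀
  obtain ⟨C₁, hC₁, hC₁b⟩ := homog_bound hβhom
  obtain ⟨C₂, hC₂, hC₂b⟩ := homog_bound hαhom
  refine ⟨C₁ + C₂, by positivity, fun a b ha hb x ξ => ?_⟩
  set M : ℝ := max (max a b) 1 with hMdef
  have hM1 : (1 : ℝ) ≤ M := le_max_right _ _
  have hbM : b ≤ M := le_trans (le_max_right a b) (le_max_left _ _)
  have haM : a ≤ M := le_trans (le_max_left a b) (le_max_left _ _)
  set sx : ℝ := ∑ i, x i ^ 2 with hsxdef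
  set sξ : ℝ := ∑ i, ξ i ^ 2 with hsξdef
  have hsx : 0 ≤ sx := by positivity
  have hsξ : 0 ≤ sξ := by positivity
  set σt : ℝ := 1 + b * sx ^ k + a * sξ ^ ℓ with hσtdef
  have hσt1 : (1 : ℝ) ≤ σt := by
    have h1 : 0 ≤ b * sx ^ k := by positivity
    have h2 : 0 ≤ a * sξ ^ ℓ := by positivity
    rw [hσtdef]; linarith
  set e : ℝ := (1 : ℝ) - (∑ i, β i : ℝ) / (2 * (k : ℝ)) - (∑ i, α i : ℝ) / (2 * (ℓ : ℝ))
    with hedef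
  set R : ℝ := σt ^ e with hRdef
  have hR0 : 0 ≤ R := Real.rpow_nonneg (by linarith) _
  -- rewrite the polynomial as a sum of renamed pieces
  have hPQ : MvPolynomial.C b * (∑ i : Fin n, X (Sum.inl i : Fin n ⊕ Fin n) ^ 2) ^ k +
      MvPolynomial.C a * (∑ i : Fin n, X (Sum.inr i : Fin n ⊕ Fin n) ^ 2) ^ ℓ
      = b • rename Sum.inl p₀ + a • rename Sum.inr q₀ := by
    rw [hp₀def, hq₀def]
    simp [smul_eq_C_mul]
  set E₁ : ℝ := eval (Sum.elim x ξ) (multiPDeriv n β α (rename Sum.inl p₀)) with hE₁def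
  set E₂ : ℝ := eval (Sum.elim x ξ) (multiPDeriv n β α (rename Sum.inr q₀)) with hE₂def
  have hsplit : eval (Sum.elim x ξ)
      (multiPDeriv n β α
        (MvPolynomial.C b * (∑ i : Fin n, X (Sum.inl i : Fin n ⊕ Fin n) ^ 2) ^ k +
          MvPolynomial.C a * (∑ i : Fin n, X (Sum.inr i : Fin n ⊕ Fin n) ^ 2) ^ ℓ))
      = b * E₁ + a * E₂ := by
    rw [hPQ, map_add, map_smul, map_smul, map_add, smul_eval, smul_eval]
  -- bound for the first term
  have hT1 : b * |E₁| ≤ C₁ * M * R := by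
    by_cases hα' : α = 0
    · subst hα'
      have he' : e = 1 - (∑ i, β i : ℝ) / (2 * (k : ℝ)) := by
        rw [hedef]; simp
      have hone : (List.ofFn fun i : Fin n =>
          ((pderiv (R := ℝ) (Sum.inr i : Fin n ⊕ Fin n)).toLinearMap ^
            (0 : Fin n → ℕ) i)).prod = 1 := by
        apply List.prod_eq_one
        intro g hg
        obtain ⟨i, hi⟩ := List.mem_ofFn.mp hg
        subst hi
        simp
      have hE₁ : E₁ = eval x ((mD β) p₀) := by
        rw [hE₁def, multiPDeriv, Module.End.mul_apply, hone, Module.End.one_apply,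
          Lpart_rename Sum.inl_injective β p₀, eval_rename]
        rfl
      rcases le_or_gt (∑ i, β i) (2 * k) with hBle | hBgt
      · have h1 : |eval x (mD β p₀)| ≤ C₁ * sx ^ (((2 * k - ∑ i, β i : ℕ) : ℝ) / 2) :=
          hC₁b x
        calc b * |E₁| = b * |eval x (mD β p₀)| := by rw [hE₁]
          _ ≤ b * (C₁ * sx ^ (((2 * k - ∑ i, β i : ℕ) : ℝ) / 2)) :=
              mul_le_mul_of_nonneg_left h1 hb.le
          _ ≤ C₁ * M * σt ^ (1 - (∑ i, β i : ℝ) / (2 * (k : ℝ))) := by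
              have := side_bound k hk (∑ i, β i) hBle C₁ hC₁ b sx σt M hb hsx hσt1
                (by rw [hσtdef]; nlinarith [mul_nonneg ha.le (pow_nonneg hsξ ℓ)]) hbM hM1
              have hc : ((∑ i, β i : ℕ) : ℝ) = ∑ i, (β i : ℝ) := by push_cast; rfl
              rw [← hc]
              exact this
          _ = C₁ * M * R := by rw [hRdef, he']
      · rw [hE₁, hβ0 hBgt]
        simp only [map_zero, abs_zero, mul_zero]
        positivity
    · have hE₁z : E₁ = 0 := by
        rw [hE₁def, multiPDeriv, Module.End.mul_apply,
          list_pderiv_zero (fun i => Sum.inr i) α hα'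
            (fun j => pderiv_rename_ne _ (fun i => by simp) p₀),
          map_zero, map_zero]
      rw [hE₁z]
      simp only [abs_zero, mul_zero]
      positivity
  -- bound for the second term
  have hT2 : a * |E₂| ≤ C₂ * M * R := by
    have hinner : (List.ofFn fun i : Fin n =>
        ((pderiv (R := ℝ) (Sum.inr i : Fin n ⊕ Fin n)).toLinearMap ^ α i)).prod
          (rename Sum.inr q₀) = rename Sum.inr ((mD α) q₀) :=
      Lpart_rename Sum.inr_injective α q₀
    by_cases hβ' : β = 0
    · subst hβ'
      have he' : e = 1 - (∑ i, α i : ℝ) / (2 * (ℓ : ℝ)) := by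
        rw [hedef]; simp
      have hone : (List.ofFn fun i : Fin n =>
          ((pderiv (R := ℝ) (Sum.inl i : Fin n ⊕ Fin n)).toLinearMap ^
            (0 : Fin n → ℕ) i)).prod = 1 := by
        apply List.prod_eq_one
        intro g hg
        obtain ⟨i, hi⟩ := List.mem_ofFn.mp hg
        subst hi
        simp
      have hE₂ : E₂ = eval ξ ((mD α) q₀) := by
        rw [hE₂def, multiPDeriv, Module.End.mul_apply, hinner, hone, Module.End.one_apply,
          eval_rename]
        rfl
      rcases le_or_gt (∑ i, α i) (2 * ℓ) with hAle | hAgt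
      · have h1 : |eval ξ (mD α q₀)| ≤ C₂ * sξ ^ (((2 * ℓ - ∑ i, α i : ℕ) : ℝ) / 2) :=
          hC₂b ξ
        calc a * |E₂| = a * |eval ξ (mD α q₀)| := by rw [hE₂]
          _ ≤ a * (C₂ * sξ ^ (((2 * ℓ - ∑ i, α i : ℕ) : ℝ) / 2)) :=
              mul_le_mul_of_nonneg_left h1 ha.le
          _ ≤ C₂ * M * σt ^ (1 - (∑ i, α i : ℝ) / (2 * (ℓ : ℝ))) := by
              have := side_bound ℓ hl (∑ i, α i) hAle C₂ hC₂ a sξ σt M ha hsξ hσt1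
                (by rw [hσtdef]; nlinarith [mul_nonneg hb.le (pow_nonneg hsx k)]) haM hM1
              have hc : ((∑ i, α i : ℕ) : ℝ) = ∑ i, (α i : ℝ) := by push_cast; rfl
              rw [← hc]
              exact this
          _ = C₂ * M * R := by rw [hRdef, he']
      · rw [hE₂, hα0 hAgt]
        simp only [map_zero, abs_zero, mul_zero]
        positivity
    · have hE₂z : E₂ = 0 := by
        rw [hE₂def, multiPDeriv, Module.End.mul_apply, hinner,
          list_pderiv_zero (fun i => Sum.inl i) β hβ'
            (fun j => pderiv_rename_ne _ (fun i => by simp) ((mD α) q₀)),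
          map_zero]
      rw [hE₂z]
      simp only [abs_zero, mul_zero]
      positivity
  rw [hsplit]
  calc |b * E₁ + a * E₂|
      ≤ b * |E₁| + a * |E₂| := by
        refine (abs_add_le _ _).trans ?_
        rw [abs_mul, abs_mul, abs_of_pos hb, abs_of_pos ha]
    _ ≤ C₁ * M * R + C₂ * M * R := add_le_add hT1 hT2
    _ = (C₁ + C₂) * M * R := by ring
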